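/- Let (Ω, μ) be a finite measure space, let δ ∈ (0, 1/2), and let g : (-1,1) → ℝ be differentiable on (-1,1) with M := sup{|g'(s)| : |s| ≤ 1-δ} < ∞. Let c, c_ε : Ω → ℝ be measurable with |c(x)| ≤ 1 - 2δ for μ-a.e. x and |c_ε(x)| < 1 for μ-a.e. x, and assume g∘c and g∘c_ε belong to L²(μ) and c - c_ε ∈ L²(μ). Then ∫_Ω |g(c_ε(x)) - g(c(x))| dμ(x) ≤ ( δ⁻¹·(‖g∘c_ε‖_{L²(μ)} + ‖g∘c‖_{L²(μ)}) + M·μ(Ω)^{1/2} ) · ‖c_ε - c‖_{L²(μ)}. -/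

import Mathlib

open MeasureTheory Set
open scoped ENNReal NNReal

private lemma cs_helper {Ω : Type*} [MeasurableSpace Ω] (μ : Measure Ω) (f : Ω → ℝ≥0∞)
    (hf : AEMeasurable f μ) {s : Set Ω} (hs : MeasurableSet s) :
    ∫⁻ x in s, f x ∂μ ≤ (μ s) ^ (1/2:ℝ) * (∫⁻ x, f x ^ (2:ℝ) ∂μ) ^ (1/2:ℝ) := by
  have hpq : Real.HolderConjugate 2 2 := Real.HolderConjugate.two_two
  have h := ENNReal.lintegral_mul_le_Lp_mul_Lq μ hpq
    (f := s.indicator (fun _ => 1)) (g := f)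
    ((measurable_one.indicator hs).aemeasurable) hf
  have hind : s.indicator (fun _ => (1:ℝ≥0∞)) * f = s.indicator f := by
    ext x
    by_cases hx : x ∈ s <;> simp [hx]
  rw [hind, lintegral_indicator hs] at h
  have h2 : ∫⁻ a, (s.indicator (fun _ => (1:ℝ≥0∞)) a) ^ (2:ℝ) ∂μ = μ s := by
    rw [← lintegral_indicator_one hs]
    congr 1; ext x
    by_cases hx : x ∈ s <;> simp [hx, ENNReal.zero_rpow_of_pos]
  rwa [h2] at h

private lemma eLpNorm_two_formula {Ω : Type*} [MeasurableSpace Ω] (μ : Measure Ω) (f : Ω → ℝ) :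
    eLpNorm f 2 μ = (∫⁻ x, (‖f x‖₊ : ℝ≥0∞) ^ (2:ℝ) ∂μ) ^ (1/2:ℝ) := by
  rw [eLpNorm_eq_lintegral_rpow_enorm_toReal two_ne_zero ENNReal.ofNat_ne_top]
  norm_num
  rfl

/-- Estimate (5.5) of the paper: if `|c| ≤ 1 - 2δ` a.e., `|c_ε| < 1` a.e., `g` is differentiable
on `(-1,1)` with `|g'| ≤ M` on `[-(1-δ), 1-δ]`, and `g∘c, g∘c_ε, c - c_ε ∈ L²(μ)`, then
`‖g(c_ε) - g(c)‖_{L¹} ≤ (δ⁻¹ (‖g∘c_ε‖_{L²} + ‖g∘c‖_{L²}) + M μ(Ω)^{1/2}) ‖c_ε - c‖_{L²}`. -/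
theorem stmt_10 {Ω : Type*} [MeasurableSpace Ω] (μ : Measure Ω) [IsFiniteMeasure μ]
    (δ : ℝ) (hδ : δ ∈ Ioo (0 : ℝ) (1 / 2))
    (g g' : ℝ → ℝ) (hg : ∀ s ∈ Ioo (-1 : ℝ) 1, HasDerivAt g (g' s) s)
    (M : ℝ) (hM : ∀ s : ℝ, |s| ≤ 1 - δ → |g' s| ≤ M)
    (c cε : Ω → ℝ) (hc : Measurable c) (hcε : Measurable cε)
    (hcsep : ∀ᵐ x ∂μ, |c x| ≤ 1 - 2 * δ) (hcεb : ∀ᵐ x ∂μ, |cε x| < 1)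
    (hgc : MemLp (fun x => g (c x)) 2 μ) (hgcε : MemLp (fun x => g (cε x)) 2 μ)
    (hdiff : MemLp (fun x => c x - cε x) 2 μ) :
    ∫ x, |g (cε x) - g (c x)| ∂μ ≤
      (δ⁻¹ * ((eLpNorm (fun x => g (cε x)) 2 μ).toReal
          + (eLpNorm (fun x => g (c x)) 2 μ).toReal)
        + M * ((μ Set.univ).toReal) ^ (1 / 2 : ℝ)) *
      (eLpNorm (fun x => cε x - c x) 2 μ).toReal := by
  obtain ⟨hδ0, hδhalf⟩ := hδ
  have hM0 : 0 ≤ M := le_trans (abs_nonneg (g' 0)) (hM 0 (by rw [abs_zero]; linarith))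
  -- MVT Lipschitz bound
  have key : ∀ a b : ℝ, |a| ≤ 1 - δ → |b| ≤ 1 - δ → |g a - g b| ≤ M * |a - b| := by
    intro a b ha hb
    have hsub : Icc (-(1-δ)) (1-δ) ⊆ Ioo (-1:ℝ) 1 := by
      intro y hy
      constructor <;> [nlinarith [hy.1]; nlinarith [hy.2]]
    have key := (convex_Icc (-(1-δ)) (1-δ)).norm_image_sub_le_of_norm_hasDerivWithin_le
      (f := g) (f' := g')
      (fun y hy => (hg y (hsub hy)).hasDerivWithinAt)
      (fun y hy => hM y (abs_le.2 ⟨by linarith [hy.1], hy.2⟩))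
      (abs_le.1 hb |> fun h => ⟨by linarith [h.1], h.2⟩)
      (abs_le.1 ha |> fun h => ⟨by linarith [h.1], h.2⟩)
    simpa [Real.norm_eq_abs] using key
  -- notation
  set N1 := eLpNorm (fun x => g (cε x)) 2 μ with hN1def
  set N2 := eLpNorm (fun x => g (c x)) 2 μ with hN2def
  set D := eLpNorm (fun x => cε x - c x) 2 μ with hDdef
  have hdiff' : MemLp (fun x => cε x - c x) 2 μ := by
    convert hdiff.neg using 1
    ext x
    simp [neg_sub]
  have hN1 : N1 = (∫⁻ x, (‖g (cε x)‖₊ : ℝ≥0∞) ^ (2:ℝ) ∂μ) ^ (1/2:ℝ) :=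
    eLpNorm_two_formula μ _
  have hN2 : N2 = (∫⁻ x, (‖g (c x)‖₊ : ℝ≥0∞) ^ (2:ℝ) ∂μ) ^ (1/2:ℝ) :=
    eLpNorm_two_formula μ _
  have hD : D = (∫⁻ x, (‖cε x - c x‖₊ : ℝ≥0∞) ^ (2:ℝ) ∂μ) ^ (1/2:ℝ) :=
    eLpNorm_two_formula μ _
  have hN1ne : N1 ≠ ⊤ := hgcε.eLpNorm_ne_top
  have hN2ne : N2 ≠ ⊤ := hgc.eLpNorm_ne_top
  have hDne : D ≠ ⊤ := hdiff'.eLpNorm_ne_top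
  -- measurability facts
  have hgcεm : AEMeasurable (fun x => (‖g (cε x)‖₊ : ℝ≥0∞)) μ :=
    hgcε.aestronglyMeasurable.enorm
  have hgcm : AEMeasurable (fun x => (‖g (c x)‖₊ : ℝ≥0∞)) μ :=
    hgc.aestronglyMeasurable.enorm
  have hdm : Measurable (fun x => (‖cε x - c x‖₊ : ℝ≥0∞)) := (hcε.sub hc).enorm
  have hem : AEMeasurable (fun x => (‖g (cε x) - g (c x)‖₊ : ℝ≥0∞)) μ :=
    (hgcε.aestronglyMeasurable.sub hgc.aestronglyMeasurable).enorm
  -- the bad set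
  set A : Set Ω := {x | 1 - δ < |cε x|} with hAdef
  have hA : MeasurableSet A := measurableSet_lt measurable_const hcε.abs
  -- measure of A bound
  have hμA : (μ A) ^ (1/2:ℝ) ≤ ENNReal.ofReal δ⁻¹ * D := by
    have hpt : ∀ᵐ x ∂μ, x ∈ A → ENNReal.ofReal δ ≤ (‖cε x - c x‖₊ : ℝ≥0∞) := by
      filter_upwards [hcsep] with x hx hxA
      have h1 : 1 - δ < |cε x| := hxA
      have h2 : δ ≤ |cε x - c x| := by
        have := abs_sub_abs_le_abs_sub (cε x) (c x)
        linarith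
      rw [← enorm_eq_nnnorm, Real.enorm_eq_ofReal_abs]
      exact ENNReal.ofReal_le_ofReal h2
    have h1 : ENNReal.ofReal δ ^ (2:ℝ) * μ A ≤ ∫⁻ x, (‖cε x - c x‖₊:ℝ≥0∞) ^ (2:ℝ) ∂μ := by
      calc ENNReal.ofReal δ ^ (2:ℝ) * μ A = ∫⁻ _ in A, ENNReal.ofReal δ ^ (2:ℝ) ∂μ :=
            (setLIntegral_const A _).symm
        _ ≤ ∫⁻ x in A, (‖cε x - c x‖₊:ℝ≥0∞) ^ (2:ℝ) ∂μ := by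
            refine setLIntegral_mono_ae (hdm.aemeasurable.pow_const _).restrict ?_
            filter_upwards [hpt] with x hx hxA
            exact ENNReal.rpow_le_rpow (hx hxA) (by norm_num)
        _ ≤ ∫⁻ x, (‖cε x - c x‖₊:ℝ≥0∞) ^ (2:ℝ) ∂μ := setLIntegral_le_lintegral A _
    have h2 := ENNReal.rpow_le_rpow h1 (by norm_num : (0:ℝ) ≤ 1/2)
    rw [ENNReal.mul_rpow_of_nonneg _ _ (by norm_num : (0:ℝ) ≤ 1/2), ← ENNReal.rpow_mul] at h2
    norm_num at h2
    have h3 : ENNReal.ofReal δ * μ A ^ (1/2:ℝ) ≤ D := by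
      rw [hD]; convert h2 using 2 <;> norm_num
    calc (μ A) ^ (1/2:ℝ) = (ENNReal.ofReal δ⁻¹ * ENNReal.ofReal δ) * (μ A) ^ (1/2:ℝ) := by
          rw [← ENNReal.ofReal_mul (by positivity), inv_mul_cancel₀ hδ0.ne', ENNReal.ofReal_one,
            one_mul]
      _ = ENNReal.ofReal δ⁻¹ * (ENNReal.ofReal δ * (μ A) ^ (1/2:ℝ)) := mul_assoc _ _ _
      _ ≤ ENNReal.ofReal δ⁻¹ * D := mul_le_mul_right h3 _
  -- bound on A
  have boundA : ∫⁻ x in A, (‖g (cε x) - g (c x)‖₊ : ℝ≥0∞) ∂μ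
      ≤ ENNReal.ofReal δ⁻¹ * (N1 + N2) * D := by
    calc ∫⁻ x in A, (‖g (cε x) - g (c x)‖₊ : ℝ≥0∞) ∂μ
        ≤ ∫⁻ x in A, ((‖g (cε x)‖₊ : ℝ≥0∞) + (‖g (c x)‖₊ : ℝ≥0∞)) ∂μ :=
          lintegral_mono fun x => ENNReal.coe_le_coe.2 (nnnorm_sub_le _ _)
      _ = ∫⁻ x in A, (‖g (cε x)‖₊ : ℝ≥0∞) ∂μ + ∫⁻ x in A, (‖g (c x)‖₊ : ℝ≥0∞) ∂μ :=
          lintegral_add_left' hgcεm.restrict _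
      _ ≤ (μ A) ^ (1/2:ℝ) * (∫⁻ x, (‖g (cε x)‖₊:ℝ≥0∞) ^ (2:ℝ) ∂μ) ^ (1/2:ℝ)
          + (μ A) ^ (1/2:ℝ) * (∫⁻ x, (‖g (c x)‖₊:ℝ≥0∞) ^ (2:ℝ) ∂μ) ^ (1/2:ℝ) :=
          add_le_add (cs_helper μ _ hgcεm hA) (cs_helper μ _ hgcm hA)
      _ = (μ A) ^ (1/2:ℝ) * (N1 + N2) := by rw [hN1, hN2]; ring
      _ ≤ (ENNReal.ofReal δ⁻¹ * D) * (N1 + N2) := mul_le_mul_left hμA _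
      _ = ENNReal.ofReal δ⁻¹ * (N1 + N2) * D := by ring
  -- bound on Aᶜ
  have boundC : ∫⁻ x in Aᶜ, (‖g (cε x) - g (c x)‖₊ : ℝ≥0∞) ∂μ
      ≤ ENNReal.ofReal M * (μ univ) ^ (1/2:ℝ) * D := by
    have hptc : ∀ᵐ x ∂μ, x ∈ Aᶜ →
        (‖g (cε x) - g (c x)‖₊ : ℝ≥0∞) ≤ ENNReal.ofReal M * (‖cε x - c x‖₊ : ℝ≥0∞) := by
      filter_upwards [hcsep] with x hx hxc
      have h1 : |cε x| ≤ 1 - δ := not_lt.1 hxc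
      have h2 : |c x| ≤ 1 - δ := by linarith
      have h3 := key (cε x) (c x) h1 h2
      rw [← enorm_eq_nnnorm, ← enorm_eq_nnnorm, Real.enorm_eq_ofReal_abs, Real.enorm_eq_ofReal_abs,
        ← ENNReal.ofReal_mul hM0]
      exact ENNReal.ofReal_le_ofReal h3
    calc ∫⁻ x in Aᶜ, (‖g (cε x) - g (c x)‖₊ : ℝ≥0∞) ∂μ
        ≤ ∫⁻ x in Aᶜ, ENNReal.ofReal M * (‖cε x - c x‖₊ : ℝ≥0∞) ∂μ :=
          setLIntegral_mono_ae ((hdm.const_mul _).aemeasurable.restrict) hptc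
      _ = ENNReal.ofReal M * ∫⁻ x in Aᶜ, (‖cε x - c x‖₊ : ℝ≥0∞) ∂μ :=
          lintegral_const_mul _ hdm
      _ ≤ ENNReal.ofReal M *
          ((μ Aᶜ) ^ (1/2:ℝ) * (∫⁻ x, (‖cε x - c x‖₊:ℝ≥0∞) ^ (2:ℝ) ∂μ) ^ (1/2:ℝ)) :=
          mul_le_mul_right (cs_helper μ _ hdm.aemeasurable hA.compl) _
      _ ≤ ENNReal.ofReal M * ((μ univ) ^ (1/2:ℝ) * D) := by
          rw [hD]
          exact mul_le_mul_right
            (mul_le_mul_left (ENNReal.rpow_le_rpow (measure_mono (subset_univ _))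
              (by norm_num)) _) _
      _ = ENNReal.ofReal M * (μ univ) ^ (1/2:ℝ) * D := (mul_assoc _ _ _).symm
  -- combine
  set E : ℝ≥0∞ := (ENNReal.ofReal δ⁻¹ * (N1 + N2) + ENNReal.ofReal M * (μ univ) ^ (1/2:ℝ)) * D
    with hEdef
  have hmain : ∫⁻ x, (‖g (cε x) - g (c x)‖₊ : ℝ≥0∞) ∂μ ≤ E := by
    rw [← lintegral_add_compl _ hA, hEdef]
    calc ∫⁻ x in A, _ ∂μ + ∫⁻ x in Aᶜ, _ ∂μ
        ≤ ENNReal.ofReal δ⁻¹ * (N1 + N2) * D + ENNReal.ofReal M * (μ univ) ^ (1/2:ℝ) * D :=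
          add_le_add boundA boundC
      _ = (ENNReal.ofReal δ⁻¹ * (N1 + N2) + ENNReal.ofReal M * (μ univ) ^ (1/2:ℝ)) * D := by
          ring
  have hEne : E ≠ ⊤ := by
    rw [hEdef]
    refine ENNReal.mul_ne_top (ENNReal.add_ne_top.2 ⟨?_, ?_⟩) hDne
    · exact ENNReal.mul_ne_top ENNReal.ofReal_ne_top (ENNReal.add_ne_top.2 ⟨hN1ne, hN2ne⟩)
    · exact ENNReal.mul_ne_top ENNReal.ofReal_ne_top
        (ENNReal.rpow_ne_top_of_nonneg (by norm_num) (measure_ne_top μ _))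
  -- convert the integral
  have habs : AEStronglyMeasurable (fun x => |g (cε x) - g (c x)|) μ := by
    have := (hgcε.aestronglyMeasurable.sub hgc.aestronglyMeasurable).norm
    simpa [Real.norm_eq_abs] using this
  have hconv : ∫ x, |g (cε x) - g (c x)| ∂μ
      = (∫⁻ x, (‖g (cε x) - g (c x)‖₊ : ℝ≥0∞) ∂μ).toReal := by
    rw [integral_eq_lintegral_of_nonneg_ae (ae_of_all _ fun x => abs_nonneg _) habs]
    congr 1
    apply lintegral_congr fun x => ?_
    rw [← enorm_eq_nnnorm, Real.enorm_eq_ofReal_abs]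
  rw [hconv]
  refine le_trans (ENNReal.toReal_mono hEne hmain) (le_of_eq ?_)
  rw [hEdef, ENNReal.toReal_mul, ENNReal.toReal_add
    (ENNReal.mul_ne_top ENNReal.ofReal_ne_top (ENNReal.add_ne_top.2 ⟨hN1ne, hN2ne⟩))
    (ENNReal.mul_ne_top ENNReal.ofReal_ne_top
      (ENNReal.rpow_ne_top_of_nonneg (by norm_num) (measure_ne_top μ _))),
    ENNReal.toReal_mul, ENNReal.toReal_mul, ENNReal.toReal_add hN1ne hN2ne,
    ENNReal.toReal_ofReal (by positivity), ENNReal.toReal_ofReal hM0,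
    ← ENNReal.toReal_rpow]
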